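/- Let K be a field and (P, ≤) a finite poset admitting a chain-partition C_1, …, C_n together with a C-cut splitting each C_i into a nonempty lower part C_i^{low} and a nonempty upper part C_i^{up}. Let U, U^{low}, U^{up} be the Moebius matrices over K of P, of the sub-poset P^{low} on ∪_i C_i^{low}, and of the sub-poset P^{up} on ∪_i C_i^{up}, respectively; let ^c denote compression with respect to the chains (of the corresponding part); let J_0 be the n×n matrix over K with [J_0]_{ij} = 1 if i ≠ j and the elements of C_i are comparable to those of C_j, and [J_0]_{ij} = 0 otherwise; and set J = I + J_0. Then ^c(U)·J = ^c(U^{low})·J + ^c(U^{up})·J − ^c(U^{low})·J·^c(U^{up})·J. -/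

import Mathlib

open Matrix Finset

attribute [local instance] Classical.propDecidable

/-- The zeta matrix of a finite poset `Q` over `K`: entry `(x, y)` is `1` if `x ≤ y`
and `0` otherwise. -/
noncomputable def zetaM (K : Type*) [Field K] (Q : Type*) [Fintype Q] [PartialOrder Q] :
    Matrix Q Q K :=
  Matrix.of fun x y => if x ≤ y then 1 else 0

/-- The Moebius matrix of a finite poset `Q` over `K`: the inverse of its zeta matrix. -/
noncomputable def moebiusM (K : Type*) [Field K] (Q : Type*) [Fintype Q] [PartialOrder Q] :
    Matrix Q Q K :=
  (zetaM K Q)⁻¹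

/-- Compression of a matrix `M` (indexed by a type `Q` of poset elements, mapping to `P`
via `ι`) with respect to a family of chains `D : Fin n → Finset P`: the `(i,k)`-entry is
the sum of the entries `M x y` with `ι x` in the `i`-th chain and `ι y` in the `k`-th
chain. -/
noncomputable def chainComp {K P : Type*} [Field K] {n : ℕ} (D : Fin n → Finset P)
    {Q : Type*} [Fintype Q] (ι : Q → P) (M : Matrix Q Q K) :
    Matrix (Fin n) (Fin n) K :=
  Matrix.of fun i k => ∑ x : Q, ∑ y : Q, if ι x ∈ D i ∧ ι y ∈ D k then M x y else 0

lemma zetaM_isUnit_det {K : Type*} [Field K] (Q : Type*) [Fintype Q] [PartialOrder Q] :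
    IsUnit (zetaM K Q).det := by
  classical
  letI : Fintype (LinearExtension Q) := ‹Fintype Q›
  let e : Q ≃ LinearExtension Q := Equiv.refl Q
  have hBT : ((Matrix.reindex e e) (zetaM K Q)).BlockTriangular id := by
    intro a b hab
    simp only [Matrix.reindex_apply, Matrix.submatrix_apply, zetaM, Matrix.of_apply]
    rw [if_neg]
    intro hle
    exact absurd (toLinearExtension.monotone hle) (not_le.mpr hab)
  have hdet := Matrix.det_of_upperTriangular hBT
  rw [Matrix.det_reindex_self] at hdet
  rw [hdet]
  have h1 : ∀ a : LinearExtension Q, (Matrix.reindex e e) (zetaM K Q) a a = 1 := by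
    intro a
    simp only [Matrix.reindex_apply, Matrix.submatrix_apply, zetaM, Matrix.of_apply]
    exact if_pos le_rfl
  rw [Finset.prod_congr rfl fun a _ => h1 a]
  simp

lemma moebiusM_mul_zetaM {K : Type*} [Field K] (Q : Type*) [Fintype Q] [PartialOrder Q] :
    moebiusM K Q * zetaM K Q = 1 :=
  Matrix.nonsing_inv_mul _ (zetaM_isUnit_det Q)

lemma zetaM_mul_moebiusM {K : Type*} [Field K] (Q : Type*) [Fintype Q] [PartialOrder Q] :
    zetaM K Q * moebiusM K Q = 1 :=
  Matrix.mul_nonsing_inv _ (zetaM_isUnit_det Q)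

lemma chainComp_eq {K P : Type*} [Field K] {n : ℕ} (D : Fin n → Finset P) {Q : Type*}
    [Fintype Q] (ι : Q → P) (M : Matrix Q Q K) :
    chainComp D ι M =
      (Matrix.of fun (x : Q) i => if ι x ∈ D i then (1 : K) else 0)ᵀ * M *
        (Matrix.of fun (x : Q) i => if ι x ∈ D i then (1 : K) else 0) := by
  classical
  ext i k
  simp only [chainComp, Matrix.of_apply, Matrix.mul_apply, Matrix.transpose_apply,
    Finset.sum_mul, Finset.mul_sum]
  rw [Finset.sum_comm]
  refine Finset.sum_congr rfl fun x _ => Finset.sum_congr rfl fun y _ => ?_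
  by_cases h1 : ι y ∈ D i <;> by_cases h2 : ι x ∈ D k <;> simp [h1, h2]

lemma sum_collapse' {M : Type*} [AddCommMonoid M] {P : Type*} {p : P → Prop}
    [Fintype {z // p z}] (x : P) (g : {z // p z} → M) [Decidable (p x)]
    [∀ a : {z // p z}, Decidable ((a : P) = x)] :
    (∑ a : {z // p z}, if (a : P) = x then g a else 0) =
      if hx : p x then g ⟨x, hx⟩ else 0 := by
  split_ifs with hx
  · rw [Finset.sum_eq_single (⟨x, hx⟩ : {z // p z})]
    · simp
    · intro a _ ha
      rw [if_neg]
      exact fun h => ha (Subtype.ext h)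
    · simp
  · apply Finset.sum_eq_zero
    intro a _
    rw [if_neg]
    exact fun h => hx (h ▸ a.2)

lemma Emul_collapse {K P : Type*} [Field K] [Fintype P] {p q : P → Prop}
    [Fintype {z // p z}] [Fintype {z // q z}]
    (A : Matrix {z // p z} {z // q z} K) (x y : P) [Decidable (p x)] [Decidable (q y)] :
    ((Matrix.of fun (a : {z // p z}) z => if (a : P) = z then (1 : K) else 0)ᵀ * A *
      (Matrix.of fun (b : {z // q z}) z => if (b : P) = z then (1 : K) else 0)) x y =
      if hx : p x then (if hy : q y then A ⟨x, hx⟩ ⟨y, hy⟩ else 0) else 0 := by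
  classical
  simp only [Matrix.mul_apply, Matrix.transpose_apply, Matrix.of_apply, ite_mul, one_mul,
    zero_mul, mul_ite, mul_one, mul_zero]
  rw [sum_collapse' y (fun b : {z // q z} => ∑ a : {z // p z}, if (a : P) = x then A a b else 0)]
  by_cases hy : q y
  · simp only [dif_pos hy]
    rw [sum_collapse' x (fun a : {z // p z} => A a ⟨y, hy⟩)]
  · simp [hy]

/-- **Cut theorem for Moebius functions of posets (general form).**
Let `P` be a finite poset with a chain-partition `C₁, …, Cₙ` (pairwise disjoint
nonempty chains covering `P`, such that comparability of some pair of elements of `Cᵢ`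
and `Cⱼ` forces comparability of all such pairs) and a `C`-cut splitting each `Cᵢ` into
a nonempty lower part `Cᵢˡᵒʷ` and a nonempty upper part `Cᵢᵘᵖ`, such that comparable
elements `x ∈ Cᵢˡᵒʷ`, `y ∈ Cⱼᵘᵖ` always satisfy `x < y`. Let `U`, `Uˡᵒʷ`, `Uᵘᵖ` be the
Moebius matrices of `P`, `Pˡᵒʷ = ∪ᵢ Cᵢˡᵒʷ`, `Pᵘᵖ = ∪ᵢ Cᵢᵘᵖ` (with their induced
orders), let `cU`, `cUlow`, `cUup` denote their compressions along the respective
chains, and let `J = I + J₀` where `J₀` is the chain-comparability adjacency matrix.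
Then `^c(U)·J = ^c(Uˡᵒʷ)·J + ^c(Uᵘᵖ)·J − ^c(Uˡᵒʷ)·J·^c(Uᵘᵖ)·J`. -/
theorem moebius_cut_theorem {K P : Type*} [Field K] [PartialOrder P] [Fintype P]
    {n : ℕ} (C lowC upC : Fin n → Finset P)
    (hChain : ∀ i, IsChain (· ≤ ·) (C i : Set P))
    (hCdisj : ∀ i j, i ≠ j → Disjoint (C i) (C j))
    (hCcover : ∀ x : P, ∃ i, x ∈ C i)
    (hCcomp : ∀ i j, i ≠ j → (∃ x ∈ C i, ∃ y ∈ C j, x ≤ y ∨ y ≤ x) →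
      ∀ x ∈ C i, ∀ y ∈ C j, x ≤ y ∨ y ≤ x)
    (hsplit : ∀ i, lowC i ∪ upC i = C i)
    (hludisj : ∀ i, Disjoint (lowC i) (upC i))
    (hlowne : ∀ i, (lowC i).Nonempty)
    (hupne : ∀ i, (upC i).Nonempty)
    (hcut : ∀ i j, ∀ x ∈ lowC i, ∀ y ∈ upC j, (x ≤ y ∨ y ≤ x) → x < y)
    (J : Matrix (Fin n) (Fin n) K)
    (hJ : J = 1 + Matrix.of fun i j : Fin n =>
      if i ≠ j ∧ ∀ x ∈ C i, ∀ y ∈ C j, x ≤ y ∨ y ≤ x then (1 : K) else 0)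
    (cU cUlow cUup : Matrix (Fin n) (Fin n) K)
    (hcU : cU = chainComp C (id : P → P) (moebiusM K P))
    (hcUlow : cUlow = chainComp lowC (Subtype.val : {x : P // ∃ i, x ∈ lowC i} → P)
      (moebiusM K {x : P // ∃ i, x ∈ lowC i}))
    (hcUup : cUup = chainComp upC (Subtype.val : {x : P // ∃ i, x ∈ upC i} → P)
      (moebiusM K {x : P // ∃ i, x ∈ upC i})) :
    cU * J = cUlow * J + cUup * J - cUlow * J * (cUup * J) := by
  classical
  letI : DecidableEq P := fun a b => Classical.propDecidable _
  letI : DecidableEq {x : P // ∃ i, x ∈ lowC i} := fun a b => Classical.propDecidable _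
  letI : DecidableEq {x : P // ∃ i, x ∈ upC i} := fun a b => Classical.propDecidable _
  subst hcU hcUlow hcUup
  -- basic membership facts
  have hmemC : ∀ {i j : Fin n} {x : P}, x ∈ C i → x ∈ C j → i = j := by
    intro i j x hi hj
    by_contra h
    exact Finset.disjoint_left.mp (hCdisj i j h) hi hj
  have hlsub : ∀ i, lowC i ⊆ C i := fun i => (hsplit i) ▸ Finset.subset_union_left
  have husub : ∀ i, upC i ⊆ C i := fun i => (hsplit i) ▸ Finset.subset_union_right
  have hnotboth : ∀ {x : P} {i j : Fin n}, x ∈ lowC i → x ∈ upC j → False := by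
    intro x i j hx hy
    have hij : i = j := hmemC (hlsub i hx) (husub j hy)
    subst hij
    exact Finset.disjoint_left.mp (hludisj i) hx hy
  have hlowOrUp : ∀ x : P, (∃ i, x ∈ lowC i) ∨ (∃ i, x ∈ upC i) := by
    intro x
    obtain ⟨i, hi⟩ := hCcover x
    rw [← hsplit i, Finset.mem_union] at hi
    exact hi.imp (fun h => ⟨i, h⟩) (fun h => ⟨i, h⟩)
  have hle_lu : ∀ (a : {x : P // ∃ i, x ∈ lowC i}) (b : {x : P // ∃ i, x ∈ upC i}),
      ((a : P) ≤ (b : P) ∨ (b : P) ≤ (a : P)) → (a : P) < (b : P) := by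
    intro a b h
    obtain ⟨i, hi⟩ := a.2
    obtain ⟨j, hj⟩ := b.2
    exact hcut i j _ hi _ hj h
  have hnotle : ∀ (b : {x : P // ∃ i, x ∈ upC i}) (a : {x : P // ∃ i, x ∈ lowC i}),
      ¬ (b : P) ≤ (a : P) := by
    intro b a h
    exact lt_irrefl _ (lt_of_lt_of_le (hle_lu a b (Or.inr h)) h)
  -- matrices
  set El : Matrix {x : P // ∃ i, x ∈ lowC i} P K :=
    Matrix.of fun a z => if (a : P) = z then (1 : K) else 0 with hEl
  set Eu : Matrix {x : P // ∃ i, x ∈ upC i} P K :=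
    Matrix.of fun a z => if (a : P) = z then (1 : K) else 0 with hEu
  set Fl : Matrix {x : P // ∃ i, x ∈ lowC i} (Fin n) K :=
    Matrix.of fun a i => if (a : P) ∈ lowC i then (1 : K) else 0 with hFl
  set Fu : Matrix {x : P // ∃ i, x ∈ upC i} (Fin n) K :=
    Matrix.of fun a i => if (a : P) ∈ upC i then (1 : K) else 0 with hFu
  set G : Matrix P (Fin n) K := Matrix.of fun x i => if id x ∈ C i then (1 : K) else 0 with hG
  set Zlu : Matrix {x : P // ∃ i, x ∈ lowC i} {x : P // ∃ i, x ∈ upC i} K :=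
    Matrix.of fun a b => if (a : P) ≤ (b : P) then (1 : K) else 0 with hZluD
  set Ul := moebiusM K {x : P // ∃ i, x ∈ lowC i} with hUl
  set Uu := moebiusM K {x : P // ∃ i, x ∈ upC i} with hUu
  set Zl := zetaM K {x : P // ∃ i, x ∈ lowC i} with hZl
  set Zu := zetaM K {x : P // ∃ i, x ∈ upC i} with hZu
  -- collapse lemmas
  have cll : ∀ (A : Matrix {x : P // ∃ i, x ∈ lowC i} {x : P // ∃ i, x ∈ lowC i} K) (x y : P),
      (Elᵀ * A * El) x y = if hx : (∃ i, x ∈ lowC i) then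
        (if hy : (∃ i, y ∈ lowC i) then A ⟨x, hx⟩ ⟨y, hy⟩ else 0) else 0 := by
    intro A x y
    rw [hEl]
    exact Emul_collapse A x y
  have cuu : ∀ (A : Matrix {x : P // ∃ i, x ∈ upC i} {x : P // ∃ i, x ∈ upC i} K) (x y : P),
      (Euᵀ * A * Eu) x y = if hx : (∃ i, x ∈ upC i) then
        (if hy : (∃ i, y ∈ upC i) then A ⟨x, hx⟩ ⟨y, hy⟩ else 0) else 0 := by
    intro A x y
    rw [hEu]
    exact Emul_collapse A x y
  have clu : ∀ (A : Matrix {x : P // ∃ i, x ∈ lowC i} {x : P // ∃ i, x ∈ upC i} K) (x y : P),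
      (Elᵀ * A * Eu) x y = if hx : (∃ i, x ∈ lowC i) then
        (if hy : (∃ i, y ∈ upC i) then A ⟨x, hx⟩ ⟨y, hy⟩ else 0) else 0 := by
    intro A x y
    rw [hEl, hEu]
    exact Emul_collapse A x y
  -- block identities
  have hElEl : El * Elᵀ = 1 := by
    ext a b
    rw [hEl]
    simp only [Matrix.mul_apply, Matrix.transpose_apply, Matrix.of_apply, ite_mul, one_mul,
      zero_mul]
    rw [Finset.sum_ite_eq]
    simp only [Finset.mem_univ, if_true]
    by_cases h : a = b
    · subst h; simp [Matrix.one_apply]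
    · rw [if_neg (fun hh => h (Subtype.ext hh.symm)), Matrix.one_apply_ne h]
  have hEuEu : Eu * Euᵀ = 1 := by
    ext a b
    rw [hEu]
    simp only [Matrix.mul_apply, Matrix.transpose_apply, Matrix.of_apply, ite_mul, one_mul,
      zero_mul]
    rw [Finset.sum_ite_eq]
    simp only [Finset.mem_univ, if_true]
    by_cases h : a = b
    · subst h; simp [Matrix.one_apply]
    · rw [if_neg (fun hh => h (Subtype.ext hh.symm)), Matrix.one_apply_ne h]
  have hsum : Elᵀ * El + Euᵀ * Eu = (1 : Matrix P P K) := by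
    have e1 : Elᵀ * El = Elᵀ * (1 : Matrix {x : P // ∃ i, x ∈ lowC i} {x : P // ∃ i, x ∈ lowC i} K) * El := by rw [Matrix.mul_one]
    have e2 : Euᵀ * Eu = Euᵀ * (1 : Matrix {x : P // ∃ i, x ∈ upC i} {x : P // ∃ i, x ∈ upC i} K) * Eu := by rw [Matrix.mul_one]
    ext x y
    rw [Matrix.add_apply, e1, e2, cll, cuu]
    by_cases hx : ∃ i, x ∈ lowC i
    · have hx' : ¬ ∃ i, x ∈ upC i := by
        rintro ⟨j, hj⟩
        obtain ⟨i, hi⟩ := hx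
        exact hnotboth hi hj
      rw [dif_pos hx, dif_neg hx', add_zero]
      by_cases hy : ∃ i, y ∈ lowC i
      · rw [dif_pos hy]
        by_cases hxy : x = y
        · subst hxy; simp [Matrix.one_apply]
        · rw [Matrix.one_apply_ne (fun hh => hxy (congrArg Subtype.val hh)),
            Matrix.one_apply_ne hxy]
      · rw [dif_neg hy, Matrix.one_apply_ne (fun hh => hy (by rw [← hh]; exact hx))]
    · have hx' : ∃ i, x ∈ upC i := (hlowOrUp x).resolve_left hx
      rw [dif_neg hx, dif_pos hx', zero_add]
      by_cases hy : ∃ i, y ∈ upC i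
      · rw [dif_pos hy]
        by_cases hxy : x = y
        · subst hxy; simp [Matrix.one_apply]
        · rw [Matrix.one_apply_ne (fun hh => hxy (congrArg Subtype.val hh)),
            Matrix.one_apply_ne hxy]
      · rw [dif_neg hy, Matrix.one_apply_ne (fun hh => hy (by rw [← hh]; exact hx'))]
  have hZdec : zetaM K P = Elᵀ * Zl * El + Euᵀ * Zu * Eu + Elᵀ * Zlu * Eu := by
    ext x y
    rw [Matrix.add_apply, Matrix.add_apply, cll, cuu, clu]
    by_cases hx : ∃ i, x ∈ lowC i
    · have hx' : ¬ ∃ i, x ∈ upC i := by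
        rintro ⟨j, hj⟩
        obtain ⟨i, hi⟩ := hx
        exact hnotboth hi hj
      rw [dif_pos hx, dif_neg hx', dif_pos hx, add_zero]
      by_cases hy : ∃ i, y ∈ lowC i
      · have hy' : ¬ ∃ i, y ∈ upC i := by
          rintro ⟨j, hj⟩
          obtain ⟨i, hi⟩ := hy
          exact hnotboth hi hj
        rw [dif_pos hy, dif_neg hy', add_zero, hZl]
        rfl
      · have hy' : ∃ i, y ∈ upC i := (hlowOrUp y).resolve_left hy
        rw [dif_neg hy, dif_pos hy', zero_add, hZluD]
        rfl
    · have hx' : ∃ i, x ∈ upC i := (hlowOrUp x).resolve_left hx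
      rw [dif_neg hx, dif_pos hx', dif_neg hx, zero_add, add_zero]
      by_cases hy : ∃ i, y ∈ upC i
      · rw [dif_pos hy, hZu]
        rfl
      · have hy' : ∃ i, y ∈ lowC i := (hlowOrUp y).resolve_right hy
        rw [dif_neg hy]
        simp only [zetaM, Matrix.of_apply]
        rw [if_neg]
        exact hnotle ⟨x, hx'⟩ ⟨y, hy'⟩
  have hElEu : El * Euᵀ = 0 := by
    ext a b
    rw [hEl, hEu]
    simp only [Matrix.mul_apply, Matrix.transpose_apply, Matrix.of_apply, ite_mul, one_mul,
      zero_mul]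
    rw [Finset.sum_ite_eq]
    simp only [Finset.mem_univ, if_true, Matrix.zero_apply]
    rw [if_neg]
    intro hh
    obtain ⟨i, hi⟩ := a.2
    obtain ⟨j, hj⟩ := b.2
    exact hnotboth hi (by rw [hh] at hj; exact hj)
  have hEuEl : Eu * Elᵀ = 0 := by
    ext a b
    rw [hEl, hEu]
    simp only [Matrix.mul_apply, Matrix.transpose_apply, Matrix.of_apply, ite_mul, one_mul,
      zero_mul]
    rw [Finset.sum_ite_eq]
    simp only [Finset.mem_univ, if_true, Matrix.zero_apply]
    rw [if_neg]
    intro hh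
    obtain ⟨i, hi⟩ := a.2
    obtain ⟨j, hj⟩ := b.2
    exact hnotboth hj (by rw [hh]; exact hi)
  have hUlZl := moebiusM_mul_zetaM (K := K) {x : P // ∃ i, x ∈ lowC i}
  rw [← hUl, ← hZl] at hUlZl
  have hUuZu := moebiusM_mul_zetaM (K := K) {x : P // ∃ i, x ∈ upC i}
  rw [← hUu, ← hZu] at hUuZu
  -- cancellation helpers
  have c1 : ∀ (X : Matrix {x : P // ∃ i, x ∈ lowC i} P K), El * (Elᵀ * X) = X := by
    intro X; rw [← Matrix.mul_assoc, hElEl, Matrix.one_mul]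
  have c2 : ∀ (X : Matrix {x : P // ∃ i, x ∈ upC i} P K), El * (Euᵀ * X) = 0 := by
    intro X; rw [← Matrix.mul_assoc, hElEu, Matrix.zero_mul]
  have c3 : ∀ (X : Matrix {x : P // ∃ i, x ∈ lowC i} P K), Eu * (Elᵀ * X) = 0 := by
    intro X; rw [← Matrix.mul_assoc, hEuEl, Matrix.zero_mul]
  have c4 : ∀ (X : Matrix {x : P // ∃ i, x ∈ upC i} P K), Eu * (Euᵀ * X) = X := by
    intro X; rw [← Matrix.mul_assoc, hEuEu, Matrix.one_mul]
  have c5 : ∀ (X : Matrix {x : P // ∃ i, x ∈ lowC i} P K), Ul * (Zl * X) = X := by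
    intro X; rw [← Matrix.mul_assoc, hUlZl]; exact Matrix.one_mul X
  have c6 : ∀ (X : Matrix {x : P // ∃ i, x ∈ upC i} P K), Uu * (Zu * X) = X := by
    intro X; rw [← Matrix.mul_assoc, hUuZu]; exact Matrix.one_mul X
  have hMZ : (Elᵀ * Ul * El + Euᵀ * Uu * Eu + Elᵀ * (-(Ul * Zlu * Uu)) * Eu) * zetaM K P
      = 1 := by
    rw [hZdec]
    simp only [Matrix.add_mul, Matrix.mul_add, Matrix.neg_mul, Matrix.mul_neg,
      Matrix.mul_assoc, c1, c2, c3, c4, c5, c6, Matrix.mul_zero, Matrix.zero_mul]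
    rw [← hsum]
    abel
  have hU : moebiusM K P = Elᵀ * Ul * El + Euᵀ * Uu * Eu + Elᵀ * (-(Ul * Zlu * Uu)) * Eu := by
    rw [moebiusM]
    exact Matrix.inv_eq_left_inv hMZ
  have hElG : El * G = Fl := by
    ext a i
    rw [hEl, hG, hFl]
    simp only [Matrix.mul_apply, Matrix.of_apply, ite_mul, one_mul, zero_mul, id_eq]
    rw [Finset.sum_ite_eq]
    simp only [Finset.mem_univ, if_true]
    by_cases h : (a : P) ∈ lowC i
    · rw [if_pos (hlsub i h), if_pos h]
    · rw [if_neg h, if_neg]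
      intro hC
      obtain ⟨j, hj⟩ := a.2
      have hij : i = j := hmemC hC (hlsub j hj)
      exact h (by rw [hij]; exact hj)
  have hEuG : Eu * G = Fu := by
    ext a i
    rw [hEu, hG, hFu]
    simp only [Matrix.mul_apply, Matrix.of_apply, ite_mul, one_mul, zero_mul, id_eq]
    rw [Finset.sum_ite_eq]
    simp only [Finset.mem_univ, if_true]
    by_cases h : (a : P) ∈ upC i
    · rw [if_pos (husub i h), if_pos h]
    · rw [if_neg h, if_neg]
      intro hC
      obtain ⟨j, hj⟩ := a.2
      have hij : i = j := hmemC hC (husub j hj)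
      exact h (by rw [hij]; exact hj)
  have hZluF : Zlu = Fl * J * Fuᵀ := by
    ext a b
    obtain ⟨j0, hj0⟩ := a.2
    obtain ⟨l0, hl0⟩ := b.2
    have hrow : ∀ l, (∑ j, Fl a j * J j l) = J j0 l := by
      intro l
      rw [Finset.sum_eq_single j0]
      · rw [hFl]
        simp [hj0]
      · intro j _ hjne
        rw [hFl]
        simp only [Matrix.of_apply]
        rw [if_neg, zero_mul]
        intro hmem
        exact hjne (hmemC (hlsub j hmem) (hlsub j0 hj0))
      · simp
    have hRHS : (Fl * J * Fuᵀ) a b = J j0 l0 := by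
      rw [Matrix.mul_apply]
      simp only [Matrix.transpose_apply, Matrix.mul_apply]
      rw [Finset.sum_eq_single l0]
      · rw [hrow l0, hFu]
        simp [hl0]
      · intro l _ hlne
        rw [hFu]
        simp only [Matrix.of_apply]
        rw [if_neg, mul_zero]
        intro hmem
        exact hlne (hmemC (husub l hmem) (husub l0 hl0))
      · simp
    rw [hRHS, hZluD]
    simp only [Matrix.of_apply]
    rw [hJ]
    simp only [Matrix.add_apply, Matrix.one_apply, Matrix.of_apply]
    by_cases hjl : j0 = l0
    · subst hjl
      have hab : (a : P) ≤ (b : P) := by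
        have hcomp : (a : P) ≤ (b : P) ∨ (b : P) ≤ (a : P) := by
          by_cases heq : (a : P) = (b : P)
          · exact (hnotboth (heq ▸ hj0) hl0).elim
          · exact hChain j0 (Finset.mem_coe.mpr (hlsub j0 hj0))
              (Finset.mem_coe.mpr (husub j0 hl0)) heq
        exact (hle_lu a b hcomp).le
      rw [if_pos hab, if_pos rfl, if_neg (fun hc => hc.1 rfl)]
      norm_num
    · have h1 : ¬ (j0 = l0) := hjl
      rw [if_neg h1, zero_add]
      by_cases hall : ∀ x ∈ C j0, ∀ y ∈ C l0, x ≤ y ∨ y ≤ x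
      · have hab : (a : P) ≤ (b : P) :=
          (hle_lu a b (hall _ (hlsub j0 hj0) _ (husub l0 hl0))).le
        rw [if_pos hab, if_pos ⟨hjl, hall⟩]
      · have hnab : ¬ (a : P) ≤ (b : P) := fun h =>
          hall (hCcomp j0 l0 hjl ⟨_, hlsub j0 hj0, _, husub l0 hl0, Or.inl h⟩)
        rw [if_neg hnab, if_neg (fun hc => hall hc.2)]
  -- final assembly
  rw [chainComp_eq C id (moebiusM K P), chainComp_eq lowC Subtype.val Ul,
    chainComp_eq upC Subtype.val Uu, ← hFl, ← hFu, ← hG]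
  have hGTl : Gᵀ * Elᵀ = Flᵀ := by rw [← Matrix.transpose_mul, hElG]
  have hGTu : Gᵀ * Euᵀ = Fuᵀ := by rw [← Matrix.transpose_mul, hEuG]
  have d1 : ∀ (X : Matrix (Fin n) {x : P // ∃ i, x ∈ lowC i} K), X * El * G = X * Fl := by
    intro X; rw [Matrix.mul_assoc, hElG]
  have d2 : ∀ (X : Matrix (Fin n) {x : P // ∃ i, x ∈ upC i} K), X * Eu * G = X * Fu := by
    intro X; rw [Matrix.mul_assoc, hEuG]
  have hGdec : Gᵀ * moebiusM K P * G =
      Flᵀ * Ul * Fl + Fuᵀ * Uu * Fu - Flᵀ * Ul * Fl * J * (Fuᵀ * Uu * Fu) := by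
    rw [hU, hZluF]
    simp only [Matrix.add_mul, Matrix.mul_add, Matrix.neg_mul, Matrix.mul_neg,
      ← Matrix.mul_assoc]
    rw [hGTl, hGTu, d1 (Flᵀ * Ul), d2 (Fuᵀ * Uu), d2 (Flᵀ * Ul * Fl * J * Fuᵀ * Uu)]
    abel
  rw [hGdec]
  noncomm_ring
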